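/- Let P_f be column-stochastic and C_r^+ the state division projection. If from every state in the range of C_r^+ there is positive probability of eventually leaving that set (i.e., the spectral radius of P_f C_r^+ is strictly less than 1), then the transition operator P_{r/q} := C_r^- (I − P_f C_r^+)^{-1} is well-defined and maps probability vectors to probability vectors. -/

import Mathlib

attribute [local instance] Matrix.linftyOpNormedRing Matrix.linftyOpNormedAlgebra

open Finset Filter NNReal Topology

lemma aux_unit {R : Type*} [NormedRing R] [CompleteSpace R] (a : R)
    (h : Summable fun k : ℕ => ‖a ^ k‖) :
    IsUnit (1 - a) ∧ Ring.inverse (1 - a) = ∑' k : ℕ, a ^ k := by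
  have hs : Summable fun k : ℕ => a ^ k := h.of_norm
  have hS := hs.hasSum
  set S := ∑' k : ℕ, a ^ k with hSdef
  have hshift : HasSum (fun k : ℕ => a ^ (k + 1)) (S - 1) := by
    have := (hasSum_nat_add_iff' (f := fun k : ℕ => a ^ k) 1).mpr hS
    simpa using this
  have hmul : a * S = S - 1 := by
    have h2 := hS.mul_left a
    simp_rw [← pow_succ'] at h2
    exact h2.unique hshift
  have hmulr : S * a = S - 1 := by
    have h2 := hS.mul_right a
    simp_rw [← pow_succ] at h2
    exact h2.unique hshift
  have h1 : (1 - a) * S = 1 := by rw [sub_mul, one_mul, hmul]; abel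
  have h2 : S * (1 - a) = 1 := by rw [mul_sub, mul_one, hmulr]; abel
  exact ⟨⟨⟨1 - a, S, h1, h2⟩, rfl⟩, Ring.inverse_unit ⟨1 - a, S, h1, h2⟩⟩

lemma matrix_entry_le_norm {n : ℕ} (M : Matrix (Fin n) (Fin n) ℝ) (i : Fin n) (j : Fin n) :
    ‖M i j‖ ≤ ‖M‖ := by
  have h1 : ‖M i j‖₊ ≤ ∑ k, ‖M i k‖₊ :=
    Finset.single_le_sum (f := fun k => ‖M i k‖₊) (fun _ _ => zero_le) (Finset.mem_univ j)
  have h2 : (∑ k, ‖M i k‖₊) ≤ ‖M‖₊ := by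
    rw [Matrix.linfty_opNNNorm_def]
    exact Finset.le_sup (f := fun i => ∑ k, ‖M i k‖₊) (Finset.mem_univ i)
  exact_mod_cast h1.trans h2

noncomputable def entryCLM {n : ℕ} (i : Fin n) (j : Fin n) :
    Matrix (Fin n) (Fin n) ℝ →L[ℝ] ℝ :=
  LinearMap.mkContinuous
    { toFun := fun M => M i j, map_add' := fun _ _ => rfl, map_smul' := fun _ _ => rfl }
    1 (fun M => by rw [one_mul]; exact matrix_entry_le_norm M i j)

theorem stmt_5 (N r : ℕ) (hr : r ≤ N)
    (Pf Cp Cm : Matrix (Fin (N + 1)) (Fin (N + 1)) ℝ)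
    (hCp : Cp = Matrix.of fun (i j : Fin (N + 1)) =>
      if i = j ∧ (i : ℕ) < N - r then (1 : ℝ) else 0)
    (hCm : Cm = Matrix.of fun (i j : Fin (N + 1)) =>
      if i = j ∧ N - r ≤ (i : ℕ) then (1 : ℝ) else 0)
    (hPfnn : ∀ i j, 0 ≤ Pf i j) (hPfcol : ∀ j, ∑ i, Pf i j = 1)
    (hspec : spectralRadius ℝ (Pf * Cp) < 1) :
    IsUnit (1 - Pf * Cp) ∧
    ∀ π : Fin (N + 1) → ℝ, (∀ i, 0 ≤ π i) → ∑ i, π i = 1 →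
      (∀ i, 0 ≤ (Cm * (1 - Pf * Cp)⁻¹).mulVec π i) ∧
      ∑ i, (Cm * (1 - Pf * Cp)⁻¹).mulVec π i = 1 := by
  set A := Pf * Cp with hA
  have hCpnn : ∀ i j, 0 ≤ Cp i j := by
    intro i j; rw [hCp]; simp only [Matrix.of_apply]; split <;> norm_num
  have hCmnn : ∀ i j, 0 ≤ Cm i j := by
    intro i j; rw [hCm]; simp only [Matrix.of_apply]; split <;> norm_num
  have hAnn : ∀ i j, 0 ≤ A i j := by
    intro i j; rw [hA, Matrix.mul_apply]
    exact Finset.sum_nonneg fun k _ => mul_nonneg (hPfnn i k) (hCpnn k j)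
  have hswap : ∀ (M B : Matrix (Fin (N+1)) (Fin (N+1)) ℝ) (j : Fin (N+1)),
      ∑ i, (M * B) i j = ∑ k, (∑ i, M i k) * B k j := by
    intro M B j
    simp_rw [Matrix.mul_apply, Finset.sum_mul]
    rw [Finset.sum_comm]
  have hCpsum : ∀ k : Fin (N+1), ∑ i, Cp i k = if (k : ℕ) < N - r then 1 else 0 := by
    intro k
    rw [hCp]
    rw [Finset.sum_eq_single k (fun i _ hi => by simp [hi]) (by simp)]
    simp
  have hAsum : ∀ k : Fin (N+1), ∑ i, A i k = if (k : ℕ) < N - r then 1 else 0 := by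
    intro k
    rw [hA, hswap Pf Cp k]
    simp_rw [hPfcol, one_mul]
    exact hCpsum k
  have hAcol : ∀ j, ∑ i, A i j ≤ 1 := by
    intro j; rw [hAsum j]; split <;> norm_num
  have hpownn : ∀ m i j, 0 ≤ (A ^ m) i j := by
    intro m
    induction m with
    | zero => intro i j; simp [pow_zero, Matrix.one_apply]; split <;> norm_num
    | succ m ih =>
      intro i j
      rw [pow_succ, Matrix.mul_apply]
      exact Finset.sum_nonneg fun k _ => mul_nonneg (ih i k) (hAnn k j)
  have hpowcol : ∀ m j, ∑ i, (A ^ m) i j ≤ 1 := by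
    intro m
    induction m with
    | zero => intro j; simp [pow_zero, Matrix.one_apply]
    | succ m ih =>
      intro j
      have hswap : ∑ i, (A ^ m * A) i j = ∑ k, (∑ i, (A ^ m) i k) * A k j := by
        simp_rw [Matrix.mul_apply, Finset.sum_mul]
        rw [Finset.sum_comm]
      rw [pow_succ, hswap]
      calc ∑ k, (∑ i, (A ^ m) i k) * A k j ≤ ∑ k, 1 * A k j := by
            refine Finset.sum_le_sum fun k _ => ?_
            exact mul_le_mul_of_nonneg_right (ih k) (hAnn k j)
        _ = ∑ k, A k j := by simp
        _ ≤ 1 := hAcol j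
  have hpowentry : ∀ m i j, (A ^ m) i j ≤ 1 := fun m i j =>
    le_trans (Finset.single_le_sum (fun k _ => hpownn m k j) (Finset.mem_univ i)) (hpowcol m j)
  have hpownorm : ∀ m, ‖A ^ m‖ ≤ (N + 1 : ℝ) := by
    intro m
    have : ‖A ^ m‖₊ ≤ ((N : ℝ≥0) + 1) := by
      rw [Matrix.linfty_opNNNorm_def]
      refine Finset.sup_le fun i _ => ?_
      calc ∑ j, ‖(A ^ m) i j‖₊ ≤ ∑ _j : Fin (N+1), 1 := by
            refine Finset.sum_le_sum fun j _ => ?_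
            have hle : ‖(A ^ m) i j‖ ≤ 1 := by
              rw [Real.norm_eq_abs, abs_le]
              exact ⟨by linarith [hpownn m i j], hpowentry m i j⟩
            exact_mod_cast hle
        _ = ((N : ℝ≥0) + 1) := by simp
    calc ‖A ^ m‖ = ((‖A ^ m‖₊ : ℝ≥0) : ℝ) := rfl
      _ ≤ (((N : ℝ≥0) + 1 : ℝ≥0) : ℝ) := by exact_mod_cast this
      _ = (N + 1 : ℝ) := by push_cast; ring
  -- norms of powers of t • A are summable for 0 ≤ t < 1
  have key : ∀ t : ℝ, 0 ≤ t → t < 1 →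
      ∀ i j, 0 ≤ Ring.inverse (1 - t • A) i j := by
    intro t ht0 ht1 i j
    have hsum : Summable fun k : ℕ => ‖(t • A) ^ k‖ := by
      refine Summable.of_nonneg_of_le (fun k => norm_nonneg _) (fun k => ?_)
        ((summable_geometric_of_lt_one ht0 ht1).mul_right (N + 1 : ℝ))
      rw [smul_pow, norm_smul, norm_pow, Real.norm_of_nonneg ht0]
      exact mul_le_mul_of_nonneg_left (hpownorm k) (pow_nonneg ht0 k)
    obtain ⟨hu, hinv⟩ := aux_unit _ hsum
    rw [hinv]
    have hS := (hsum.of_norm).hasSum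
    have hentry := ((entryCLM i j).hasSum hS)
    have hgoal : (0:ℝ) ≤ (entryCLM i j) (∑' (k : ℕ), (t • A) ^ k) := by
      refine le_of_le_of_eq ?_ hentry.tsum_eq
      refine tsum_nonneg fun k => ?_
      show 0 ≤ ((t • A) ^ k) i j
      rw [smul_pow, Matrix.smul_apply, smul_eq_mul]
      exact mul_nonneg (pow_nonneg ht0 k) (hpownn k i j)
    exact hgoal
  have hunit : IsUnit (1 - A) := by
    have h1 : (1 : ℝ) ∈ resolventSet ℝ A :=
      spectrum.mem_resolventSet_of_spectralRadius_lt (by simpa using hspec)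
    simpa [resolventSet] using h1
  have hBnn : ∀ i j, 0 ≤ Ring.inverse (1 - A) i j := by
    intro i j
    set u : ℕ → ℝ := fun k => 1 - 1 / (k + 1) with hu
    have hu0 : ∀ k : ℕ, 0 ≤ u k := by
      intro k
      have h1 : 1 / ((k : ℝ) + 1) ≤ 1 := by
        rw [div_le_one (by positivity)]; linarith [Nat.cast_nonneg (α := ℝ) k]
      simp only [hu]; linarith
    have hu1 : ∀ k : ℕ, u k < 1 := by
      intro k
      have h1 : 0 < 1 / ((k : ℝ) + 1) := by positivity
      simp only [hu]; linarith
    have hulim : Tendsto u atTop (𝓝 1) := by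
      have h1 : Tendsto (fun k : ℕ => 1 / ((k : ℝ) + 1)) atTop (𝓝 0) :=
        tendsto_one_div_add_atTop_nhds_zero_nat
      have h2 := (tendsto_const_nhds (x := (1:ℝ)) (f := atTop (α := ℕ))).sub h1
      simpa [hu, one_div] using h2
    have hcont : ContinuousAt (fun t : ℝ => Ring.inverse (1 - t • A)) 1 := by
      have h1 : ContinuousAt (fun t : ℝ => (1 : Matrix (Fin (N+1)) (Fin (N+1)) ℝ) - t • A) 1 :=
        continuousAt_const.sub (continuousAt_id.smul continuousAt_const)
      have h2 : ContinuousAt Ring.inverse ((1 : Matrix (Fin (N+1)) (Fin (N+1)) ℝ) - (1:ℝ) • A) := by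
        rw [one_smul]; exact NormedRing.inverse_continuousAt hunit.unit
      exact ContinuousAt.comp (g := Ring.inverse) h2 h1
    have hlim : Tendsto (fun k => Ring.inverse (1 - u k • A) i j) atTop
        (𝓝 (Ring.inverse (1 - A) i j)) := by
      have h1 := hcont.tendsto.comp hulim
      have h2 := ((entryCLM i j).continuous.tendsto _).comp h1
      simp only [one_smul] at h2; exact h2
    exact ge_of_tendsto hlim (Filter.Eventually.of_forall fun k => key (u k) (hu0 k) (hu1 k) i j)
  have hinv_eq : (1 - A)⁻¹ = Ring.inverse (1 - A) := Matrix.nonsing_inv_eq_ringInverse _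
  have hBnn' : ∀ i j, 0 ≤ (1 - A)⁻¹ i j := by rw [hinv_eq]; exact hBnn
  have hdet : IsUnit (1 - A).det := (Matrix.isUnit_iff_isUnit_det _).mp hunit
  have hmulinv : (1 - A) * (1 - A)⁻¹ = 1 := Matrix.mul_nonsing_inv _ hdet
  have hcol1 : ∀ j, ∑ i, (Cm * (1 - A)⁻¹) i j = 1 := by
    intro j
    rw [hswap]
    have hstep : ∀ k : Fin (N+1), (∑ i, Cm i k) = ∑ i, (1 - A) i k := by
      intro k
      have h1 : ∑ i, ((1 : Matrix (Fin (N+1)) (Fin (N+1)) ℝ) - A) i k = 1 - ∑ i, A i k := by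
        simp [Matrix.sub_apply, Finset.sum_sub_distrib, Matrix.one_apply]
      have h2 : ∑ i, Cm i k = if N - r ≤ (k : ℕ) then 1 else 0 := by
        rw [hCm]
        rw [Finset.sum_eq_single k (fun i _ hi => by simp [hi]) (by simp)]
        simp
      rw [h1, h2, hAsum]
      by_cases h : (k : ℕ) < N - r
      · rw [if_pos h, if_neg (by omega)]; norm_num
      · rw [if_neg h, if_pos (by omega)]; norm_num
    simp_rw [hstep]
    rw [← hswap, hmulinv]
    simp [Matrix.one_apply]
  have hmulvec : ∀ (M : Matrix (Fin (N+1)) (Fin (N+1)) ℝ) (v : Fin (N+1) → ℝ) (i : Fin (N+1)),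
      M.mulVec v i = ∑ j, M i j * v j := by
    intro M v i; rfl
  refine ⟨hunit, fun π hπ hπs => ⟨fun i => ?_, ?_⟩⟩
  · rw [hmulvec]
    refine Finset.sum_nonneg fun j _ => mul_nonneg ?_ (hπ j)
    rw [Matrix.mul_apply]
    exact Finset.sum_nonneg fun k _ => mul_nonneg (hCmnn i k) (hBnn' k j)
  · have h1 : ∑ i, (Cm * (1 - A)⁻¹).mulVec π i
        = ∑ j, (∑ i, (Cm * (1 - A)⁻¹) i j) * π j := by
      simp_rw [hmulvec, Finset.sum_mul]
      rw [Finset.sum_comm]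
    rw [h1]
    simp_rw [hcol1, one_mul]
    exact hπs
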